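/- arXiv:1406.4775 — 2 statements merged into one kernel-verified Lean document; each statement's English description precedes it below -/
import Mathlib

section
/- Let G ~ N(0,1) and K(x) = E[((x+G)⁺)²] = (1+x²)Φ(x) + xφ(x), where φ and Φ are the standard Gaussian density and distribution function. Then the function z ↦ K(√z) is concave on [0,∞). -/
open MeasureTheory ProbabilityTheory Filter Topology

/-- The standard Gaussian density `φ(x) = e^{-x²/2}/√(2π)`. -/
noncomputable def gaussPhi (x : ℝ) : ℝ := Real.exp (-x ^ 2 / 2) / Real.sqrt (2 * Real.pi)

/-- The standard Gaussian distribution function `Φ(x) = ∫_{-∞}^x φ`. -/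
noncomputable def gaussCdf (x : ℝ) : ℝ := ((gaussianReal 0 1) (Set.Iic x)).toReal

/-- `K(x) = E[((x+G)⁺)²]` for `G ~ N(0,1)`. -/
noncomputable def Kfun (x : ℝ) : ℝ :=
  ∫ g : ℝ, (max (x + g) 0) ^ 2 ∂(gaussianReal 0 1)

open Real Set
open scoped ENNReal NNReal

lemma gaussPhi_eq : gaussPhi = gaussianPDFReal 0 1 := by
  funext x
  simp [gaussPhi, gaussianPDFReal, div_eq_mul_inv, mul_comm]

lemma gaussPhi_pos (x : ℝ) : 0 < gaussPhi x := by
  apply div_pos (Real.exp_pos _)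
  positivity

lemma continuous_gaussPhi : Continuous gaussPhi := by
  unfold gaussPhi; fun_prop

lemma integrable_gaussPhi : Integrable gaussPhi := by
  rw [gaussPhi_eq]; exact integrable_gaussianPDFReal 0 1

lemma integrable_mul_gaussPhi : Integrable (fun g : ℝ => g * gaussPhi g) := by
  have h := (integrable_mul_exp_neg_mul_sq (b := 1/2) (by norm_num)).mul_const
    (Real.sqrt (2 * Real.pi))⁻¹
  refine h.congr ?_
  filter_upwards with g
  simp only [gaussPhi, div_eq_mul_inv]
  ring_nf

lemma integrable_sq_mul_gaussPhi : Integrable (fun g : ℝ => g ^ 2 * gaussPhi g) := by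
  have h := (integrable_rpow_mul_exp_neg_mul_sq (b := 1/2) (by norm_num) (s := 2)
    (by norm_num)).mul_const (Real.sqrt (2 * Real.pi))⁻¹
  refine h.congr ?_
  filter_upwards with g
  rw [show (2:ℝ) = ((2:ℕ):ℝ) by norm_num, Real.rpow_natCast]
  simp only [gaussPhi, div_eq_mul_inv]
  ring_nf

lemma hasDerivAt_gaussPhi (x : ℝ) : HasDerivAt gaussPhi (-x * gaussPhi x) x := by
  have h : HasDerivAt (fun x : ℝ => -x ^ 2 / 2) (-x) x := by
    have := ((hasDerivAt_pow 2 x).neg).div_const 2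
    simpa using this.congr_deriv (by ring)
  have := (h.exp).div_const (Real.sqrt (2 * Real.pi))
  refine this.congr_deriv ?_
  simp only [gaussPhi]; ring

lemma hasDerivAt_neg_mul_gaussPhi (x : ℝ) :
    HasDerivAt (fun g : ℝ => -(g * gaussPhi g)) ((x ^ 2 - 1) * gaussPhi x) x := by
  have := ((hasDerivAt_id x).mul (hasDerivAt_gaussPhi x)).neg
  refine this.congr_deriv ?_
  simp only [id_eq]; ring

lemma tendsto_gaussPhi_atBot : Tendsto gaussPhi atBot (𝓝 0) := by
  have h1 : Tendsto (fun g : ℝ => g ^ 2) atBot atTop := by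
    have h : Tendsto (fun g : ℝ => (-g) ^ 2) atBot atTop :=
      (tendsto_pow_atTop (two_ne_zero)).comp tendsto_neg_atBot_atTop
    simpa [neg_pow] using h
  have h2 : Tendsto (fun g : ℝ => -g ^ 2 / 2) atBot atBot := by
    have := tendsto_neg_atTop_atBot.comp h1
    exact Tendsto.atBot_div_const (by norm_num) this
  have h3 := (Real.tendsto_exp_atBot.comp h2).div_const (Real.sqrt (2 * Real.pi))
  rw [zero_div] at h3
  exact h3.congr (fun g => rfl)

lemma gaussPhi_le (g : ℝ) : gaussPhi g ≤ Real.exp (g + 1/2) / Real.sqrt (2 * Real.pi) := by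
  apply div_le_div_of_nonneg_right ?_ ?_ |>.trans_eq rfl
  · exact Real.exp_le_exp.mpr (by nlinarith [sq_nonneg (g + 1)])
  · positivity

lemma tendsto_neg_mul_gaussPhi_atBot :
    Tendsto (fun g : ℝ => -(g * gaussPhi g)) atBot (𝓝 0) := by
  have hb : Tendsto (fun g : ℝ => -g * Real.exp g) atBot (𝓝 0) := by
    have := (Real.tendsto_pow_mul_exp_neg_atTop_nhds_zero 1).comp tendsto_neg_atBot_atTop
    simpa [Function.comp_def, neg_neg] using this
  have hb2 : Tendsto (fun g : ℝ => (-g * Real.exp g) * (Real.exp (1/2) / Real.sqrt (2 * Real.pi)))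
      atBot (𝓝 0) := by simpa using hb.mul_const _
  apply squeeze_zero_norm' _ hb2
  filter_upwards [eventually_le_atBot (0:ℝ)] with g hg
  have h0 : g * gaussPhi g ≤ 0 := mul_nonpos_of_nonpos_of_nonneg hg (gaussPhi_pos g).le
  have h1 : ‖-(g * gaussPhi g)‖ = (-g) * gaussPhi g := by
    rw [norm_neg, Real.norm_eq_abs, abs_of_nonpos h0]; ring
  rw [h1]
  calc (-g) * gaussPhi g ≤ (-g) * (Real.exp (g + 1/2) / Real.sqrt (2 * Real.pi)) :=
        mul_le_mul_of_nonneg_left (gaussPhi_le g) (neg_nonneg.mpr hg)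
    _ = -g * Real.exp g * (Real.exp (1/2) / Real.sqrt (2 * Real.pi)) := by
        rw [Real.exp_add]; ring

lemma integral_gaussianReal_eq (f : ℝ → ℝ) :
    ∫ g, f g ∂(gaussianReal 0 1) = ∫ g, gaussPhi g * f g := by
  rw [gaussianReal_of_var_ne_zero 0 one_ne_zero]
  have hd : gaussianPDF 0 1 = fun x => ((gaussianPDFReal 0 1 x).toNNReal : ℝ≥0∞) := rfl
  rw [hd, integral_withDensity_eq_integral_smul ((measurable_gaussianPDFReal 0 1).real_toNNReal) f]
  congr 1; funext x
  rw [NNReal.smul_def, Real.coe_toNNReal _ (gaussianPDFReal_nonneg 0 1 x), gaussPhi_eq]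
  rfl

lemma gaussCdf_eq (x : ℝ) : gaussCdf x = ∫ g in Set.Iic x, gaussPhi g := by
  rw [gaussCdf, gaussianReal_apply_eq_integral 0 one_ne_zero,
    ENNReal.toReal_ofReal (integral_nonneg (gaussianPDFReal_nonneg 0 1)), gaussPhi_eq]

lemma gauss_symm (f : ℝ → ℝ) (hf : Measurable f) :
    ∫ g, f g ∂(gaussianReal 0 1) = ∫ g, f (-g) ∂(gaussianReal 0 1) := by
  have hmap : (gaussianReal 0 1).map (fun g => -1 * g) = gaussianReal 0 1 := by
    have := gaussianReal_map_const_mul (μ := 0) (v := 1) (-1)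
    rw [this]
    norm_num
  conv_lhs => rw [← hmap]
  rw [integral_map (by fun_prop) (by fun_prop)]
  simp

lemma integral_Iic_gaussPhi_mul_id (x : ℝ) :
    ∫ g in Set.Iic x, g * gaussPhi g = -gaussPhi x := by
  have h := integral_Iic_of_hasDerivAt_of_tendsto' (f := fun g => -gaussPhi g)
    (f' := fun g => g * gaussPhi g) (a := x) (m := 0)
    (fun g _ => (hasDerivAt_gaussPhi g).neg.congr_deriv (by ring))
    integrable_mul_gaussPhi.integrableOn (by simpa using tendsto_gaussPhi_atBot.neg)
  simpa using h

lemma integral_Iic_gaussPhi_mul_sq (x : ℝ) :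
    ∫ g in Set.Iic x, (g ^ 2 - 1) * gaussPhi g = -(x * gaussPhi x) := by
  have h := integral_Iic_of_hasDerivAt_of_tendsto' (f := fun g => -(g * gaussPhi g))
    (f' := fun g => (g ^ 2 - 1) * gaussPhi g) (a := x) (m := 0)
    (fun g _ => hasDerivAt_neg_mul_gaussPhi g)
    ((integrable_sq_mul_gaussPhi.sub integrable_gaussPhi).congr
      (by filter_upwards with g; simp only [Pi.sub_apply]; ring)).integrableOn
    tendsto_neg_mul_gaussPhi_atBot
  simpa using h

lemma Kfun_formula (x : ℝ) :
    Kfun x = (1 + x ^ 2) * gaussCdf x + x * gaussPhi x := by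
  have hsymm := gauss_symm (fun g => (max (x + g) 0) ^ 2) (by fun_prop)
  rw [Kfun, hsymm, integral_gaussianReal_eq _]
  have hind : ∀ g : ℝ, gaussPhi g * (max (x + -g) 0) ^ 2 =
      Set.indicator (Set.Iic x) (fun g => gaussPhi g * (x - g) ^ 2) g := by
    intro g
    by_cases h : g ≤ x
    · rw [Set.indicator_of_mem (show g ∈ Set.Iic x from h)]
      rw [max_eq_left (by linarith)]
      ring_nf
    · rw [Set.indicator_of_notMem (show g ∉ Set.Iic x from h)]
      rw [max_eq_right (by linarith)]
      ring
  simp_rw [hind]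
  rw [integral_indicator measurableSet_Iic]
  have hint1 : IntegrableOn gaussPhi (Set.Iic x) := integrable_gaussPhi.integrableOn
  have hint2 : IntegrableOn (fun g : ℝ => g * gaussPhi g) (Set.Iic x) :=
    integrable_mul_gaussPhi.integrableOn
  have hint3 : IntegrableOn (fun g : ℝ => (g ^ 2 - 1) * gaussPhi g) (Set.Iic x) :=
    ((integrable_sq_mul_gaussPhi.sub integrable_gaussPhi).congr
      (by filter_upwards with g; simp only [Pi.sub_apply]; ring)).integrableOn
  have hsplit : ∀ g : ℝ, gaussPhi g * (x - g) ^ 2 =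
      (x ^ 2 + 1) * gaussPhi g + ((-2 * x) * (g * gaussPhi g) + ((g ^ 2 - 1) * gaussPhi g)) := by
    intro g; ring
  simp_rw [hsplit]
  have e1 : IntegrableOn (fun g : ℝ => (x ^ 2 + 1) * gaussPhi g) (Set.Iic x) :=
    hint1.const_mul _
  have e2 : IntegrableOn (fun g : ℝ => -2 * x * (g * gaussPhi g)) (Set.Iic x) :=
    hint2.const_mul _
  have e23 : IntegrableOn
      (fun g : ℝ => -2 * x * (g * gaussPhi g) + (g ^ 2 - 1) * gaussPhi g) (Set.Iic x) :=
    e2.add hint3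
  rw [integral_add e1 e23, integral_add e2 hint3,
    MeasureTheory.integral_const_mul, MeasureTheory.integral_const_mul,
    integral_Iic_gaussPhi_mul_id, integral_Iic_gaussPhi_mul_sq, ← gaussCdf_eq]
  ring

lemma hasDerivAt_gaussCdf (x : ℝ) : HasDerivAt gaussCdf (gaussPhi x) x := by
  have hrep : ∀ y : ℝ, gaussCdf y = gaussCdf 0 + ∫ t in (0:ℝ)..y, gaussPhi t := by
    intro y
    rw [gaussCdf_eq, gaussCdf_eq, ← intervalIntegral.integral_Iic_sub_Iic
      integrable_gaussPhi.integrableOn integrable_gaussPhi.integrableOn]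
    ring
  have h : HasDerivAt (fun y => gaussCdf 0 + ∫ t in (0:ℝ)..y, gaussPhi t) (gaussPhi x) x := by
    refine HasDerivAt.const_add _ ?_
    exact intervalIntegral.integral_hasDerivAt_right
      (integrable_gaussPhi.intervalIntegrable)
      (continuous_gaussPhi.stronglyMeasurableAtFilter _ _)
      continuous_gaussPhi.continuousAt
  exact h.congr_of_eventuallyEq (by filter_upwards with y using (hrep y))

lemma continuous_gaussCdf : Continuous gaussCdf :=
  continuous_iff_continuousAt.mpr fun x => (hasDerivAt_gaussCdf x).continuousAt

noncomputable def Ffun (z : ℝ) : ℝ :=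
  (1 + z) * gaussCdf (Real.sqrt z) + Real.sqrt z * gaussPhi (Real.sqrt z)

noncomputable def Gfun (z : ℝ) : ℝ :=
  gaussCdf (Real.sqrt z) + gaussPhi (Real.sqrt z) / Real.sqrt z

lemma hasDerivAt_Ffun {z : ℝ} (hz : 0 < z) : HasDerivAt Ffun (Gfun z) z := by
  have hs0 : Real.sqrt z ≠ 0 := by positivity
  have hsq : Real.sqrt z * Real.sqrt z = z := Real.mul_self_sqrt hz.le
  have hs : HasDerivAt Real.sqrt (1 / (2 * Real.sqrt z)) z := Real.hasDerivAt_sqrt hz.ne'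
  have hΦ : HasDerivAt (fun z => gaussCdf (Real.sqrt z))
      (gaussPhi (Real.sqrt z) * (1 / (2 * Real.sqrt z))) z :=
    (hasDerivAt_gaussCdf (Real.sqrt z)).comp z hs
  have hφ : HasDerivAt (fun z => gaussPhi (Real.sqrt z))
      ((-Real.sqrt z * gaussPhi (Real.sqrt z)) * (1 / (2 * Real.sqrt z))) z :=
    (hasDerivAt_gaussPhi (Real.sqrt z)).comp z hs
  have h1 : HasDerivAt (fun z : ℝ => (1 + z) * gaussCdf (Real.sqrt z))
      (1 * gaussCdf (Real.sqrt z) +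
        (1 + z) * (gaussPhi (Real.sqrt z) * (1 / (2 * Real.sqrt z)))) z := by
    have := (((hasDerivAt_id z).const_add 1)).mul hΦ
    exact this
  have h2 := hs.mul hφ
  have := h1.add h2
  refine this.congr_deriv ?_
  unfold Gfun
  set s := Real.sqrt z with hsdef
  rw [show z = s * s from hsq.symm]
  field_simp
  ring

lemma hasDerivAt_Gfun {z : ℝ} (hz : 0 < z) :
    HasDerivAt Gfun (-(gaussPhi (Real.sqrt z)) / (2 * z * Real.sqrt z)) z := by
  have hs0 : Real.sqrt z ≠ 0 := by positivity
  have hsq : Real.sqrt z * Real.sqrt z = z := Real.mul_self_sqrt hz.le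
  have hs : HasDerivAt Real.sqrt (1 / (2 * Real.sqrt z)) z := Real.hasDerivAt_sqrt hz.ne'
  have hΦ : HasDerivAt (fun z => gaussCdf (Real.sqrt z))
      (gaussPhi (Real.sqrt z) * (1 / (2 * Real.sqrt z))) z :=
    (hasDerivAt_gaussCdf (Real.sqrt z)).comp z hs
  have hφ : HasDerivAt (fun z => gaussPhi (Real.sqrt z))
      ((-Real.sqrt z * gaussPhi (Real.sqrt z)) * (1 / (2 * Real.sqrt z))) z :=
    (hasDerivAt_gaussPhi (Real.sqrt z)).comp z hs
  have h2 := hφ.div hs hs0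
  have := hΦ.add h2
  refine this.congr_deriv ?_
  set s := Real.sqrt z with hsdef
  rw [show z = s * s from hsq.symm]
  field_simp
  ring

lemma strictAntiOn_Gfun : StrictAntiOn Gfun (Set.Ioi 0) := by
  apply strictAntiOn_of_deriv_neg (convex_Ioi 0)
  · exact continuousOn_of_forall_continuousAt fun z hz => (hasDerivAt_Gfun hz).continuousAt
  · intro z hz
    rw [interior_Ioi] at hz
    rw [(hasDerivAt_Gfun hz).deriv]
    have hz0 : (0:ℝ) < z := hz
    have hz' : (0:ℝ) < Real.sqrt z := Real.sqrt_pos.mpr hz0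
    have h1 : (0:ℝ) < 2 * z * Real.sqrt z := by positivity
    exact div_neg_of_neg_of_pos (neg_neg_iff_pos.mpr (gaussPhi_pos _)) h1

lemma concaveOn_Ffun : ConcaveOn ℝ (Set.Ici 0) Ffun := by
  apply AntitoneOn.concaveOn_of_deriv (convex_Ici 0)
  · apply Continuous.continuousOn
    exact ((continuous_const.add continuous_id).mul
        (continuous_gaussCdf.comp Real.continuous_sqrt)).add
      (Real.continuous_sqrt.mul (continuous_gaussPhi.comp Real.continuous_sqrt))
  · rw [interior_Ici]
    exact fun z hz => (hasDerivAt_Ffun hz).differentiableAt.differentiableWithinAt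
  · rw [interior_Ici]
    intro a ha b hb hab
    rw [(hasDerivAt_Ffun ha).deriv, (hasDerivAt_Ffun hb).deriv]
    exact strictAntiOn_Gfun.antitoneOn ha hb hab

theorem K_sqrt_concave :
    (∀ x : ℝ, Kfun x = (1 + x ^ 2) * gaussCdf x + x * gaussPhi x) ∧
    ConcaveOn ℝ (Set.Ici 0) (fun z : ℝ => Kfun (Real.sqrt z)) := by
  refine ⟨Kfun_formula, ?_⟩
  have key : ∀ t ∈ Set.Ici (0:ℝ), Kfun (Real.sqrt t) = Ffun t := by
    intro t ht
    rw [Kfun_formula, Ffun, Real.sq_sqrt ht]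
  refine ⟨concaveOn_Ffun.1, fun a ha b hb w v hw hv hwv => ?_⟩
  have hmem := concaveOn_Ffun.1 ha hb hw hv hwv
  simp only [smul_eq_mul]
  calc w * Kfun (Real.sqrt a) + v * Kfun (Real.sqrt b)
      = w * Ffun a + v * Ffun b := by rw [key a ha, key b hb]
    _ ≤ Ffun (w • a + v • b) := by simpa using concaveOn_Ffun.2 ha hb hw hv hwv
    _ = Kfun (Real.sqrt (w • a + v • b)) := (key _ hmem).symm
end

section
/- Let ψ : ℝ² → ℝ be pseudo-Lipschitz. Suppose the sequences of vectors u = u(n) ∈ ℝⁿ and ũ = ũ(n) ∈ ℝⁿ satisfy (1/n)‖u(n) − ũ(n)‖₂² → 0 and limsup_n (1/n)‖ũ(n)‖₂² < ∞, and u₀ = u₀(n) ∈ ℝⁿ satisfies sup_n ‖u₀(n)‖₂ < ∞. If lim_{n→∞} (1/n) Σᵢ ψ(ũᵢ, √n (u₀)ᵢ) exists, then lim_{n→∞} (1/n) Σᵢ ψ(uᵢ, √n (u₀)ᵢ) exists and equals the same limit. -/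
open MeasureTheory Filter Topology

/-- `ψ : ℝ² → ℝ` is pseudo-Lipschitz: there is `L > 0` with
`|ψ(x) − ψ(y)| ≤ L (1 + ‖x‖₂ + ‖y‖₂) ‖x − y‖₂` (Euclidean norms on ℝ²). -/
def PseudoLipschitz (ψ : ℝ → ℝ → ℝ) : Prop :=
  ∃ L : ℝ, 0 < L ∧ ∀ x₁ x₂ y₁ y₂ : ℝ,
    |ψ x₁ x₂ - ψ y₁ y₂| ≤
      L * (1 + Real.sqrt (x₁ ^ 2 + x₂ ^ 2) + Real.sqrt (y₁ ^ 2 + y₂ ^ 2)) *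
        Real.sqrt ((x₁ - y₁) ^ 2 + (x₂ - y₂) ^ 2)

theorem pseudoLipschitz_transfer
    (ψ : ℝ → ℝ → ℝ) (hψ : PseudoLipschitz ψ)
    (u utilde u₀ : ∀ n : ℕ, Fin n → ℝ)
    (hdiff : Tendsto (fun n : ℕ => (n : ℝ)⁻¹ * ∑ i, (u n i - utilde n i) ^ 2)
      atTop (𝓝 0))
    (hbdd : ∃ C : ℝ, ∀ᶠ n : ℕ in atTop, (n : ℝ)⁻¹ * ∑ i, (utilde n i) ^ 2 ≤ C)
    (hu₀ : ∃ C : ℝ, ∀ n : ℕ, Real.sqrt (∑ i, (u₀ n i) ^ 2) ≤ C)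
    (l : ℝ)
    (hlim : Tendsto (fun n : ℕ => (n : ℝ)⁻¹ * ∑ i, ψ (utilde n i) (Real.sqrt n * u₀ n i))
      atTop (𝓝 l)) :
    Tendsto (fun n : ℕ => (n : ℝ)⁻¹ * ∑ i, ψ (u n i) (Real.sqrt n * u₀ n i))
      atTop (𝓝 l) := by
  obtain ⟨L, hL, hLip⟩ := hψ
  obtain ⟨C, hC⟩ := hbdd
  obtain ⟨C₀, hC₀⟩ := hu₀
  set ε : ℕ → ℝ := fun n => (n : ℝ)⁻¹ * ∑ i, (u n i - utilde n i) ^ 2 with hε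
  set M : ℝ := 3 * (3 + 3 * C + 2 * C₀ ^ 2) with hM
  have hu₀sq : ∀ n : ℕ, (∑ i, (u₀ n i) ^ 2) ≤ C₀ ^ 2 := by
    intro n
    have h1 : (0:ℝ) ≤ ∑ i, (u₀ n i) ^ 2 := Finset.sum_nonneg fun i _ => sq_nonneg _
    calc (∑ i, (u₀ n i) ^ 2) = Real.sqrt (∑ i, (u₀ n i) ^ 2) ^ 2 := (Real.sq_sqrt h1).symm
      _ ≤ C₀ ^ 2 := pow_le_pow_left₀ (Real.sqrt_nonneg _) (hC₀ n) 2
  -- the key per-n bound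
  have key : ∀ n : ℕ, 1 ≤ n → ((n : ℝ)⁻¹ * ∑ i, (utilde n i) ^ 2 ≤ C) → ε n ≤ 1 →
      |((n : ℝ)⁻¹ * ∑ i, ψ (u n i) (Real.sqrt n * u₀ n i)) -
        ((n : ℝ)⁻¹ * ∑ i, ψ (utilde n i) (Real.sqrt n * u₀ n i))| ≤
        L * Real.sqrt M * Real.sqrt (ε n) := by
    intro n hn hCn hεn
    have hnpos : (0:ℝ) < (n : ℝ) := by exact_mod_cast hn
    set y : Fin n → ℝ := fun i => Real.sqrt n * u₀ n i with hy
    set a : Fin n → ℝ := fun i =>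
      1 + Real.sqrt ((u n i) ^ 2 + (y i) ^ 2) + Real.sqrt ((utilde n i) ^ 2 + (y i) ^ 2) with ha
    set d : Fin n → ℝ := fun i => |u n i - utilde n i| with hd
    have had : ∀ i, |ψ (u n i) (y i) - ψ (utilde n i) (y i)| ≤ L * (a i * d i) := by
      intro i
      have := hLip (u n i) (y i) (utilde n i) (y i)
      simpa [ha, hd, Real.sqrt_sq_eq_abs, mul_assoc] using this
    have hann : ∀ i, (0:ℝ) ≤ a i := fun i => by
      have := Real.sqrt_nonneg ((u n i) ^ 2 + (y i) ^ 2)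
      have := Real.sqrt_nonneg ((utilde n i) ^ 2 + (y i) ^ 2)
      simp only [ha]; positivity
    have hdnn : ∀ i, (0:ℝ) ≤ d i := fun i => abs_nonneg _
    -- Cauchy–Schwarz
    have hCS : (∑ i, a i * d i) ≤ Real.sqrt (∑ i, (a i) ^ 2) * Real.sqrt (∑ i, (d i) ^ 2) := by
      have h1 : (∑ i, a i * d i) ^ 2 ≤ (∑ i, (a i) ^ 2) * ∑ i, (d i) ^ 2 :=
        Finset.sum_mul_sq_le_sq_mul_sq _ _ _
      have h2 : (0:ℝ) ≤ ∑ i, a i * d i :=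
        Finset.sum_nonneg fun i _ => mul_nonneg (hann i) (hdnn i)
      calc (∑ i, a i * d i) = Real.sqrt ((∑ i, a i * d i) ^ 2) := (Real.sqrt_sq h2).symm
        _ ≤ Real.sqrt ((∑ i, (a i) ^ 2) * ∑ i, (d i) ^ 2) := Real.sqrt_le_sqrt h1
        _ = _ := Real.sqrt_mul (Finset.sum_nonneg fun i _ => sq_nonneg _) _
    -- bound on ∑ a²
    have hasq : (∑ i, (a i) ^ 2) ≤ (n : ℝ) * M := by
      have hper : ∀ i : Fin n, (a i) ^ 2 ≤
          3 * (1 + (u n i) ^ 2 + (utilde n i) ^ 2 + 2 * (y i) ^ 2) := by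
        intro i
        have h1 : Real.sqrt ((u n i) ^ 2 + (y i) ^ 2) ^ 2 = (u n i) ^ 2 + (y i) ^ 2 :=
          Real.sq_sqrt (by positivity)
        have h2 : Real.sqrt ((utilde n i) ^ 2 + (y i) ^ 2) ^ 2 = (utilde n i) ^ 2 + (y i) ^ 2 :=
          Real.sq_sqrt (by positivity)
        have h3 := Real.sqrt_nonneg ((u n i) ^ 2 + (y i) ^ 2)
        have h4 := Real.sqrt_nonneg ((utilde n i) ^ 2 + (y i) ^ 2)
        simp only [ha]
        nlinarith [sq_nonneg (Real.sqrt ((u n i) ^ 2 + (y i) ^ 2) -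
            Real.sqrt ((utilde n i) ^ 2 + (y i) ^ 2)),
          sq_nonneg (1 - Real.sqrt ((u n i) ^ 2 + (y i) ^ 2)),
          sq_nonneg (1 - Real.sqrt ((utilde n i) ^ 2 + (y i) ^ 2))]
      have hy2 : ∀ i : Fin n, (y i) ^ 2 = (n : ℝ) * (u₀ n i) ^ 2 := by
        intro i
        simp only [hy]
        rw [mul_pow, Real.sq_sqrt (by positivity : (0:ℝ) ≤ (n:ℝ))]
      have husq : (∑ i, (u n i) ^ 2) ≤ 2 * (∑ i, (u n i - utilde n i) ^ 2)
          + 2 * ∑ i, (utilde n i) ^ 2 := by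
        rw [Finset.mul_sum, Finset.mul_sum, ← Finset.sum_add_distrib]
        refine Finset.sum_le_sum fun i _ => ?_
        nlinarith [sq_nonneg (u n i - 2 * utilde n i)]
      have hεn' : (∑ i, (u n i - utilde n i) ^ 2) ≤ (n : ℝ) := by
        have := hεn
        rw [hε] at this
        calc (∑ i, (u n i - utilde n i) ^ 2)
            = (n : ℝ) * ((n:ℝ)⁻¹ * ∑ i, (u n i - utilde n i) ^ 2) := by
              field_simp
          _ ≤ (n : ℝ) * 1 := by
              exact mul_le_mul_of_nonneg_left this hnpos.le
          _ = (n : ℝ) := mul_one _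
      have hCn' : (∑ i, (utilde n i) ^ 2) ≤ (n : ℝ) * C := by
        calc (∑ i, (utilde n i) ^ 2)
            = (n : ℝ) * ((n:ℝ)⁻¹ * ∑ i, (utilde n i) ^ 2) := by field_simp
          _ ≤ (n : ℝ) * C := mul_le_mul_of_nonneg_left hCn hnpos.le
      calc (∑ i, (a i) ^ 2)
          ≤ ∑ i, 3 * (1 + (u n i) ^ 2 + (utilde n i) ^ 2 + 2 * (y i) ^ 2) :=
            Finset.sum_le_sum fun i _ => hper i
        _ = 3 * ((n : ℝ) + (∑ i, (u n i) ^ 2) + (∑ i, (utilde n i) ^ 2)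
            + 2 * ((n:ℝ) * ∑ i, (u₀ n i) ^ 2)) := by
            simp only [hy2]
            rw [Finset.mul_sum]
            simp [Finset.sum_add_distrib, Finset.mul_sum, mul_add]
            ring
        _ ≤ 3 * ((n : ℝ) + (2 * (n:ℝ) + 2 * ((n:ℝ) * C)) + ((n:ℝ) * C)
            + 2 * ((n:ℝ) * C₀ ^ 2)) := by
            have h5 : (∑ i, (u n i) ^ 2) ≤ 2 * (n:ℝ) + 2 * ((n:ℝ) * C) := by
              calc (∑ i, (u n i) ^ 2) ≤ 2 * (∑ i, (u n i - utilde n i) ^ 2)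
                  + 2 * ∑ i, (utilde n i) ^ 2 := husq
                _ ≤ 2 * (n:ℝ) + 2 * ((n:ℝ) * C) := by
                    have := hεn'
                    have := hCn'
                    linarith
            have h6 : (n:ℝ) * (∑ i, (u₀ n i) ^ 2) ≤ (n:ℝ) * C₀ ^ 2 :=
              mul_le_mul_of_nonneg_left (hu₀sq n) hnpos.le
            nlinarith [hCn']
        _ = (n : ℝ) * M := by rw [hM]; ring
    -- assemble
    have hMnn : (0:ℝ) ≤ (n:ℝ) * M := le_trans (Finset.sum_nonneg fun i _ => sq_nonneg _) hasq
    have hMnn' : (0:ℝ) ≤ M := by nlinarith [hMnn, hnpos]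
    have step1 : |((n : ℝ)⁻¹ * ∑ i, ψ (u n i) (y i)) -
        ((n : ℝ)⁻¹ * ∑ i, ψ (utilde n i) (y i))| ≤
        (n : ℝ)⁻¹ * (L * ∑ i, a i * d i) := by
      rw [← mul_sub, ← Finset.sum_sub_distrib, abs_mul, abs_of_nonneg (by positivity : (0:ℝ) ≤ (n:ℝ)⁻¹)]
      refine mul_le_mul_of_nonneg_left ?_ (by positivity)
      calc |∑ i, (ψ (u n i) (y i) - ψ (utilde n i) (y i))|
          ≤ ∑ i, |ψ (u n i) (y i) - ψ (utilde n i) (y i)| := Finset.abs_sum_le_sum_abs _ _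
        _ ≤ ∑ i, L * (a i * d i) := Finset.sum_le_sum fun i _ => had i
        _ = L * ∑ i, a i * d i := by rw [Finset.mul_sum]
    have step2 : (n : ℝ)⁻¹ * (L * ∑ i, a i * d i) ≤ L * Real.sqrt M * Real.sqrt (ε n) := by
      have h1 : (∑ i, a i * d i) ≤ Real.sqrt ((n:ℝ) * M) * Real.sqrt (∑ i, (d i) ^ 2) := by
        refine le_trans hCS ?_
        exact mul_le_mul_of_nonneg_right (Real.sqrt_le_sqrt hasq) (Real.sqrt_nonneg _)
      have hd2 : (∑ i, (d i) ^ 2) = ∑ i, (u n i - utilde n i) ^ 2 := by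
        simp [hd, sq_abs]
      calc (n : ℝ)⁻¹ * (L * ∑ i, a i * d i)
          ≤ (n : ℝ)⁻¹ * (L * (Real.sqrt ((n:ℝ) * M) * Real.sqrt (∑ i, (d i) ^ 2))) := by
            refine mul_le_mul_of_nonneg_left (mul_le_mul_of_nonneg_left h1 hL.le) (by positivity)
        _ = L * Real.sqrt M * Real.sqrt (ε n) := by
            have hrt : Real.sqrt n * Real.sqrt n = (n:ℝ) := Real.mul_self_sqrt hnpos.le
            have hsn : (0:ℝ) < Real.sqrt n := Real.sqrt_pos.mpr hnpos
            simp only [hε, hd2]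
            rw [Real.sqrt_mul hnpos.le, Real.sqrt_mul (by positivity : (0:ℝ) ≤ (n:ℝ)⁻¹),
              Real.sqrt_inv,
              show ((n:ℝ))⁻¹ = (Real.sqrt n)⁻¹ * (Real.sqrt n)⁻¹ by rw [← mul_inv, hrt]]
            linear_combination (L * Real.sqrt M * Real.sqrt (∑ i, (u n i - utilde n i) ^ 2)
              * (Real.sqrt n)⁻¹) * (inv_mul_cancel₀ hsn.ne' : (Real.sqrt n)⁻¹ * Real.sqrt n = 1)
    exact step1.trans step2
  -- conclude by squeeze
  have hdiff0 : Tendsto (fun n : ℕ =>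
      ((n : ℝ)⁻¹ * ∑ i, ψ (u n i) (Real.sqrt n * u₀ n i)) -
      ((n : ℝ)⁻¹ * ∑ i, ψ (utilde n i) (Real.sqrt n * u₀ n i))) atTop (𝓝 0) := by
    have habs : Tendsto (fun n : ℕ => L * Real.sqrt M * Real.sqrt (ε n)) atTop (𝓝 0) := by
      have h1 : Tendsto (fun n : ℕ => Real.sqrt (ε n)) atTop (𝓝 0) := by
        have := (Real.continuous_sqrt.tendsto 0).comp hdiff
        simpa [Function.comp_def] using this
      have := h1.const_mul (L * Real.sqrt M)
      simpa using this
    rw [tendsto_zero_iff_norm_tendsto_zero]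
    refine squeeze_zero' ?_ ?_ habs
    · exact Eventually.of_forall fun n => norm_nonneg _
    · have h1 : ∀ᶠ n : ℕ in atTop, ε n ≤ 1 := by
        have := hdiff.eventually (eventually_le_nhds (by norm_num : (0:ℝ) < 1))
        exact this
      filter_upwards [hC, h1, eventually_ge_atTop 1] with n hCn hεn hn
      have := key n hn hCn hεn
      simpa [Real.norm_eq_abs] using this
  have := hdiff0.add hlim
  simpa using this
end
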